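/- Let n ≥ 1 and let C, D ∈ ℝ^{n×n} be symmetric. Define OGW_o(C,D) := (1/n²)(‖C‖_F² + ‖D‖_F² − 2·sup_{P ∈ O_n} tr(C P D Pᵀ)), where O_n := {P ∈ ℝ^{n×n} : Pᵀ P = I}. Then OGW_o(C,D) = (1/n²)·Σ_{i=1}^n (λᵢ↓(C) − λᵢ↓(D))², where λ₁↓(X) ≥ … ≥ λ_n↓(X) denote the eigenvalues of a symmetric matrix X in descending order. In particular OGW_o(C,D) ≥ 0, OGW_o is symmetric in its arguments, and √OGW_o satisfies the triangle inequality on symmetric n×n matrices. -/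

import Mathlib

open Matrix BigOperators

noncomputable section

/-- Squared Frobenius norm of a real matrix. -/
def frobSq {m n : ℕ} (A : Matrix (Fin m) (Fin n) ℝ) : ℝ := ∑ i, ∑ j, (A i j) ^ 2

/-- Euclidean norm of a real vector. -/
def vnorm {n : ℕ} (v : Fin n → ℝ) : ℝ := Real.sqrt (∑ i, (v i) ^ 2)

/-- Eigenvalues of a real symmetric (Hermitian) matrix, listed in descending order. -/
def eigDesc {n : ℕ} {A : Matrix (Fin n) (Fin n) ℝ} (hA : A.IsHermitian) : Fin n → ℝ :=
  fun i => (hA.eigenvalues ∘ Tuple.sort hA.eigenvalues) i.rev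

/-- Conjugating a real symmetric (Hermitian) matrix preserves symmetry. -/
theorem conjHerm {n m : ℕ} (V : Matrix (Fin n) (Fin m) ℝ) {C : Matrix (Fin n) (Fin n) ℝ}
    (hC : C.IsHermitian) : (Vᵀ * C * V).IsHermitian := by
  have h := Matrix.isHermitian_mul_mul_conjTranspose Vᵀ hC
  simpa using h


/-- The relaxation `OGW_o` of the orthogonal Gromov-Wasserstein discrepancy,
optimizing the coupling over all orthogonal matrices. -/
def OGWo (n : ℕ) (C D : Matrix (Fin n) (Fin n) ℝ) : ℝ :=
  (1 / (n : ℝ) ^ 2) * (frobSq C + frobSq D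
    - 2 * sSup ((fun P => Matrix.trace (C * P * D * Pᵀ)) ''
        {P : Matrix (Fin n) (Fin n) ℝ | Pᵀ * P = 1}))


/- ### Auxiliary lemmas -/

private lemma ogw_perm_entry {n : ℕ} (σ : Equiv.Perm (Fin n)) (i j : Fin n) :
    (σ.permMatrix ℝ) i j = if σ i = j then 1 else 0 := by
  simp [PEquiv.toMatrix_apply, Equiv.toPEquiv_apply]

private lemma ogw_sum_perm {n : ℕ} (a b : Fin n → ℝ) (σ : Equiv.Perm (Fin n)) :
    ∑ i, ∑ j, a i * b j * (σ.permMatrix ℝ) i j = ∑ i, a i * b (σ i) := by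
  refine Finset.sum_congr rfl fun i _ => ?_
  simp [ogw_perm_entry, Equiv.toPEquiv_apply, mul_ite, Finset.sum_ite_eq]

private lemma ogw_sum_smul_mat {n : ℕ} (a b : Fin n → ℝ) (w : Equiv.Perm (Fin n) → ℝ)
    (S : Matrix (Fin n) (Fin n) ℝ) (hwS : ∑ σ, w σ • σ.permMatrix ℝ = S) :
    ∑ i, ∑ j, a i * b j * S i j = ∑ σ : Equiv.Perm (Fin n), w σ * ∑ i, a i * b (σ i) := by
  have h1 : ∀ i j : Fin n, a i * b j * S i j
      = ∑ σ : Equiv.Perm (Fin n), w σ * (a i * b j * (σ.permMatrix ℝ) i j) := by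
    intro i j
    rw [← hwS, Matrix.sum_apply, Finset.mul_sum]
    exact Finset.sum_congr rfl fun σ _ => by simp [smul_eq_mul]; ring_nf
  calc ∑ i, ∑ j, a i * b j * S i j
      = ∑ i, ∑ σ : Equiv.Perm (Fin n), ∑ j, w σ * (a i * b j * (σ.permMatrix ℝ) i j) := by
        exact Finset.sum_congr rfl fun i _ => by
          rw [Finset.sum_comm]
          exact Finset.sum_congr rfl fun j _ => h1 i j
    _ = ∑ σ : Equiv.Perm (Fin n), ∑ i, ∑ j, w σ * (a i * b j * (σ.permMatrix ℝ) i j) :=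
        by rw [Finset.sum_comm]
    _ = ∑ σ : Equiv.Perm (Fin n), w σ * ∑ i, a i * b (σ i) := by
        refine Finset.sum_congr rfl fun σ _ => ?_
        rw [← ogw_sum_perm a b σ, Finset.mul_sum]
        exact Finset.sum_congr rfl fun i _ => (Finset.mul_sum _ _ _).symm

private lemma ogw_ds_bound {n : ℕ} (a b : Fin n → ℝ) (ha : Antitone a) (hb : Antitone b)
    (S : Matrix (Fin n) (Fin n) ℝ) (hS : S ∈ doublyStochastic ℝ (Fin n)) :
    ∑ i, ∑ j, a i * b j * S i j ≤ ∑ i, a i * b i := by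
  obtain ⟨w, hw0, hw1, hwS⟩ := exists_eq_sum_perm_of_mem_doublyStochastic hS
  calc ∑ i, ∑ j, a i * b j * S i j
      = ∑ σ : Equiv.Perm (Fin n), w σ * ∑ i, a i * b (σ i) := ogw_sum_smul_mat a b w S hwS
    _ ≤ ∑ σ : Equiv.Perm (Fin n), w σ * ∑ i, a i * b i := by
        refine Finset.sum_le_sum fun σ _ => mul_le_mul_of_nonneg_left ?_ (hw0 σ)
        exact (ha.monovary hb).sum_mul_comp_perm_le_sum_mul
    _ = ∑ i, a i * b i := by rw [← Finset.sum_mul, hw1, one_mul]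

private lemma ogw_sqrt_sum_triangle (n : ℕ) (u v : Fin n → ℝ) :
    Real.sqrt (∑ i, (u i + v i)^2) ≤ Real.sqrt (∑ i, (u i)^2) + Real.sqrt (∑ i, (v i)^2) := by
  have := norm_add_le (E := EuclideanSpace ℝ (Fin n)) ((WithLp.equiv 2 _).symm u)
    ((WithLp.equiv 2 _).symm v)
  simpa [EuclideanSpace.norm_eq, Real.norm_eq_abs, sq_abs, ← WithLp.toLp_add] using this

private lemma ogw_trace_diag_conj {n : ℕ} (a b : Fin n → ℝ) (Q : Matrix (Fin n) (Fin n) ℝ) :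
    Matrix.trace (diagonal a * Q * diagonal b * Qᵀ) = ∑ i, ∑ j, a i * b j * (Q i j)^2 := by
  rw [Matrix.trace]
  refine Finset.sum_congr rfl fun i _ => ?_
  rw [Matrix.diag_apply, Matrix.mul_apply]
  refine Finset.sum_congr rfl fun j _ => ?_
  rw [Matrix.mul_diagonal, Matrix.diagonal_mul, Matrix.transpose_apply]
  ring



private lemma ogw_eigDesc_antitone {n : ℕ} {A : Matrix (Fin n) (Fin n) ℝ} (hA : A.IsHermitian) :
    Antitone (eigDesc hA) := by
  intro i j hij
  exact Tuple.monotone_sort hA.eigenvalues (Fin.rev_le_rev.mpr hij)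

private lemma ogw_perm_conj_diag {n : ℕ} (e : Equiv.Perm (Fin n)) (d : Fin n → ℝ) :
    (e.permMatrix ℝ) * diagonal d * (e.permMatrix ℝ)ᵀ = diagonal (d ∘ e) := by
  ext i j
  simp only [Matrix.mul_apply, Matrix.transpose_apply, PEquiv.toMatrix_apply,
    Equiv.toPEquiv_apply, Option.mem_def, Option.some.injEq, diagonal_apply]
  simp only [ite_mul, one_mul, zero_mul, mul_ite, mul_one, mul_zero, Finset.sum_ite_eq,
    Finset.mem_univ, if_true]
  by_cases h : i = j <;> simp [h, Finset.sum_ite_eq']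

private lemma ogw_perm_orth {n : ℕ} (e : Equiv.Perm (Fin n)) :
    (e.permMatrix ℝ)ᵀ * (e.permMatrix ℝ) = 1 := by
  ext i j
  simp only [Matrix.mul_apply, Matrix.transpose_apply, PEquiv.toMatrix_apply,
    Equiv.toPEquiv_apply, Option.mem_def, Option.some.injEq, Matrix.one_apply]
  rw [Finset.sum_eq_single (e.symm i)]
  · by_cases h : i = j <;> simp [h, Equiv.apply_symm_apply, Equiv.eq_symm_apply]
  · intro k _ hk
    simp [Equiv.eq_symm_apply] at hk
    simp [hk]
  · simp

private lemma ogw_exists_ortho_diag {n : ℕ} {C : Matrix (Fin n) (Fin n) ℝ}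
    (hC : C.IsHermitian) :
    ∃ W : Matrix (Fin n) (Fin n) ℝ, Wᵀ * W = 1 ∧ W * Wᵀ = 1 ∧
      C = W * diagonal (eigDesc hC) * Wᵀ := by
  set U : Matrix (Fin n) (Fin n) ℝ := (Matrix.IsHermitian.eigenvectorUnitary hC : Matrix (Fin n) (Fin n) ℝ) with hU
  have hUst : star U = Uᵀ := by
    rw [Matrix.star_eq_conjTranspose, Matrix.conjTranspose_eq_transpose_of_trivial]
  have hUU : Uᵀ * U = 1 := by
    rw [← hUst]; exact (Matrix.mem_unitaryGroup_iff').mp (Matrix.IsHermitian.eigenvectorUnitary hC).2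
  have hUU' : U * Uᵀ = 1 := by
    rw [← hUst]; exact (Matrix.mem_unitaryGroup_iff).mp (Matrix.IsHermitian.eigenvectorUnitary hC).2
  set e : Equiv.Perm (Fin n) := (Fin.revPerm).trans (Tuple.sort hC.eigenvalues) with he
  have hed : eigDesc hC = hC.eigenvalues ∘ e := rfl
  set P : Matrix (Fin n) (Fin n) ℝ := e.permMatrix ℝ with hP
  have hPo : Pᵀ * P = 1 := ogw_perm_orth e
  have hPo' : P * Pᵀ = 1 := mul_eq_one_comm.mp hPo
  refine ⟨U * Pᵀ, ?_, ?_, ?_⟩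
  · rw [Matrix.transpose_mul, Matrix.transpose_transpose]
    simp only [← Matrix.mul_assoc]
    rw [Matrix.mul_assoc P, hUU, Matrix.mul_one, hPo']
  · rw [Matrix.transpose_mul, Matrix.transpose_transpose]
    simp only [← Matrix.mul_assoc]
    rw [Matrix.mul_assoc U, hPo, Matrix.mul_one, hUU']
  · have hdiag : diagonal (RCLike.ofReal ∘ hC.eigenvalues) = diagonal hC.eigenvalues := by
      simp [Function.comp]
    have hsp : C = U * diagonal hC.eigenvalues * Uᵀ := by
      rw [← hUst, ← hdiag]; exact Matrix.IsHermitian.spectral_theorem hC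
    rw [hed, ← ogw_perm_conj_diag e hC.eigenvalues, Matrix.transpose_mul, Matrix.transpose_transpose]
    simp only [← Matrix.mul_assoc]
    rw [Matrix.mul_assoc U Pᵀ P, hPo, Matrix.mul_one,
      Matrix.mul_assoc (U * diagonal hC.eigenvalues) Pᵀ P, hPo, Matrix.mul_one]
    exact hsp

private lemma ogw_isGreatest_trace {n : ℕ} (C D : Matrix (Fin n) (Fin n) ℝ)
    (a b : Fin n → ℝ) (ha : Antitone a) (hb : Antitone b)
    (Wc Wd : Matrix (Fin n) (Fin n) ℝ)
    (hWc1 : Wcᵀ * Wc = 1) (hWc2 : Wc * Wcᵀ = 1)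
    (hWd1 : Wdᵀ * Wd = 1) (hWd2 : Wd * Wdᵀ = 1)
    (hCeq : C = Wc * diagonal a * Wcᵀ) (hDeq : D = Wd * diagonal b * Wdᵀ) :
    IsGreatest ((fun P => Matrix.trace (C * P * D * Pᵀ)) ''
        {P : Matrix (Fin n) (Fin n) ℝ | Pᵀ * P = 1}) (∑ i, a i * b i) := by
  have c1 : ∀ X : Matrix (Fin n) (Fin n) ℝ, Wcᵀ * (Wc * X) = X := fun X => by
    rw [← Matrix.mul_assoc, hWc1, Matrix.one_mul]
  have c2 : ∀ X : Matrix (Fin n) (Fin n) ℝ, Wc * (Wcᵀ * X) = X := fun X => by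
    rw [← Matrix.mul_assoc, hWc2, Matrix.one_mul]
  have c3 : ∀ X : Matrix (Fin n) (Fin n) ℝ, Wdᵀ * (Wd * X) = X := fun X => by
    rw [← Matrix.mul_assoc, hWd1, Matrix.one_mul]
  have c4 : ∀ X : Matrix (Fin n) (Fin n) ℝ, Wd * (Wdᵀ * X) = X := fun X => by
    rw [← Matrix.mul_assoc, hWd2, Matrix.one_mul]
  have htr : ∀ P : Matrix (Fin n) (Fin n) ℝ, Pᵀ * P = 1 →
      Matrix.trace (C * P * D * Pᵀ)
        = ∑ i, ∑ j, a i * b j * ((Wcᵀ * P * Wd) i j)^2 := by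
    intro P hP
    have key : C * P * D * Pᵀ
        = Wc * ((diagonal a * (Wcᵀ * P * Wd) * diagonal b * (Wcᵀ * P * Wd)ᵀ) * Wcᵀ) := by
      rw [hCeq, hDeq]
      simp only [Matrix.transpose_mul, Matrix.transpose_transpose, Matrix.mul_assoc,
        hWc2, Matrix.mul_one, c1, c2, c3, c4]
    rw [key, Matrix.trace_mul_comm, Matrix.mul_assoc, hWc1, Matrix.mul_one,
      ogw_trace_diag_conj]
  constructor
  · refine ⟨Wc * Wdᵀ, ?_, ?_⟩
    · show (Wc * Wdᵀ)ᵀ * (Wc * Wdᵀ) = 1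
      simp only [Matrix.transpose_mul, Matrix.transpose_transpose, Matrix.mul_assoc, c1, c2,
        c3, c4, hWd2]
    · show Matrix.trace (C * (Wc * Wdᵀ) * D * (Wc * Wdᵀ)ᵀ) = ∑ i, a i * b i
      rw [htr (Wc * Wdᵀ) (by
        simp only [Matrix.transpose_mul, Matrix.transpose_transpose, Matrix.mul_assoc, c1, c2,
          c3, c4, hWd2])]
      have hQ1 : Wcᵀ * (Wc * Wdᵀ) * Wd = 1 := by
        rw [← Matrix.mul_assoc, hWc1, Matrix.one_mul, hWd1]
      rw [hQ1]
      refine Finset.sum_congr rfl fun i _ => ?_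
      simp [Matrix.one_apply, mul_ite, Finset.sum_ite_eq]
  · rintro x ⟨P, hP, rfl⟩
    have hP : Pᵀ * P = 1 := hP
    have hPP : P * Pᵀ = 1 := mul_eq_one_comm.mp hP
    have c5 : ∀ X : Matrix (Fin n) (Fin n) ℝ, Pᵀ * (P * X) = X := fun X => by
      rw [← Matrix.mul_assoc, hP, Matrix.one_mul]
    have c6 : ∀ X : Matrix (Fin n) (Fin n) ℝ, P * (Pᵀ * X) = X := fun X => by
      rw [← Matrix.mul_assoc, hPP, Matrix.one_mul]
    show Matrix.trace (C * P * D * Pᵀ) ≤ ∑ i, a i * b i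
    rw [htr P hP]
    set Q : Matrix (Fin n) (Fin n) ℝ := Wcᵀ * P * Wd with hQdef
    have hQ : Qᵀ * Q = 1 := by
      rw [hQdef]
      simp only [Matrix.transpose_mul, Matrix.transpose_transpose, Matrix.mul_assoc, c1, c2,
        c3, c4, c5, c6, hWd1]
    have hQ' : Q * Qᵀ = 1 := mul_eq_one_comm.mp hQ
    refine ogw_ds_bound a b ha hb (Matrix.of fun i j => (Q i j)^2) ?_
    rw [mem_doublyStochastic_iff_sum]
    refine ⟨fun i j => sq_nonneg _, fun i => ?_, fun j => ?_⟩
    · have := congrFun (congrFun hQ' i) i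
      rw [Matrix.mul_apply] at this
      simpa [Matrix.one_apply, pow_two] using this
    · have := congrFun (congrFun hQ j) j
      rw [Matrix.mul_apply] at this
      simpa [Matrix.one_apply, pow_two] using this

private lemma ogw_frobSq_eq {n : ℕ} (A : Matrix (Fin n) (Fin n) ℝ) (a : Fin n → ℝ)
    (W : Matrix (Fin n) (Fin n) ℝ) (hW1 : Wᵀ * W = 1)
    (hA : A = W * diagonal a * Wᵀ) : frobSq A = ∑ i, (a i)^2 := by
  have h1 : frobSq A = Matrix.trace (A * Aᵀ) := by
    rw [Matrix.trace]
    refine Finset.sum_congr rfl fun i _ => ?_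
    rw [Matrix.diag_apply, Matrix.mul_apply]
    exact Finset.sum_congr rfl fun j _ => by rw [Matrix.transpose_apply, pow_two]
  have c1 : ∀ X : Matrix (Fin n) (Fin n) ℝ, Wᵀ * (W * X) = X := fun X => by
    rw [← Matrix.mul_assoc, hW1, Matrix.one_mul]
  have key : A * Aᵀ = W * ((diagonal a * diagonal a) * Wᵀ) := by
    rw [hA]
    simp only [Matrix.transpose_mul, Matrix.transpose_transpose, Matrix.diagonal_transpose,
      Matrix.mul_assoc, c1]
  rw [h1, key, Matrix.trace_mul_comm, Matrix.mul_assoc, Matrix.mul_assoc, hW1, Matrix.mul_one,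
    Matrix.diagonal_mul_diagonal, Matrix.trace_diagonal]
  exact Finset.sum_congr rfl fun i _ => (pow_two _).symm

private lemma OGWo_eq {n : ℕ} (C D : Matrix (Fin n) (Fin n) ℝ)
    (hC : C.IsHermitian) (hD : D.IsHermitian) :
    OGWo n C D = (1 / (n : ℝ) ^ 2) * ∑ i, (eigDesc hC i - eigDesc hD i) ^ 2 := by
  obtain ⟨Wc, hWc1, hWc2, hCeq⟩ := ogw_exists_ortho_diag hC
  obtain ⟨Wd, hWd1, hWd2, hDeq⟩ := ogw_exists_ortho_diag hD
  have hg := ogw_isGreatest_trace C D (eigDesc hC) (eigDesc hD)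
    (ogw_eigDesc_antitone hC) (ogw_eigDesc_antitone hD) Wc Wd hWc1 hWc2 hWd1 hWd2 hCeq hDeq
  have hsup := hg.csSup_eq
  rw [OGWo, hsup, ogw_frobSq_eq C (eigDesc hC) Wc hWc1 hCeq,
    ogw_frobSq_eq D (eigDesc hD) Wd hWd1 hDeq]
  have key : ∑ i, (eigDesc hC i - eigDesc hD i)^2
      = ∑ i, (eigDesc hC i)^2 + ∑ i, (eigDesc hD i)^2
        - 2 * ∑ i, eigDesc hC i * eigDesc hD i := by
    rw [← Finset.sum_add_distrib, Finset.mul_sum, ← Finset.sum_sub_distrib]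
    exact Finset.sum_congr rfl fun i _ => by ring
  rw [key]


/-- `OGW_o(C,D) = (1/n²)·∑ᵢ (λᵢ↓(C) − λᵢ↓(D))²`; in particular it is nonnegative,
symmetric in its arguments, and its square root satisfies the triangle inequality. -/
theorem OGWo_closed_form (n : ℕ) (hn : 1 ≤ n) (C D : Matrix (Fin n) (Fin n) ℝ)
    (hC : C.IsHermitian) (hD : D.IsHermitian) :
    OGWo n C D = (1 / (n : ℝ) ^ 2) * ∑ i, (eigDesc hC i - eigDesc hD i) ^ 2
    ∧ 0 ≤ OGWo n C D
    ∧ OGWo n C D = OGWo n D C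
    ∧ (∀ E : Matrix (Fin n) (Fin n) ℝ, E.IsHermitian →
        Real.sqrt (OGWo n C E) ≤ Real.sqrt (OGWo n C D) + Real.sqrt (OGWo n D E)) := by
  constructor
  · exact OGWo_eq C D hC hD
  · constructor
    · rw [OGWo_eq C D hC hD]
      have h1 : (0:ℝ) ≤ 1 / (n : ℝ) ^ 2 := by positivity
      exact mul_nonneg h1 (Finset.sum_nonneg fun i _ => sq_nonneg _)
    · constructor
      · rw [OGWo_eq C D hC hD, OGWo_eq D C hD hC]
        congr 1
        exact Finset.sum_congr rfl fun i _ => by ring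
      · intro E hE
        rw [OGWo_eq C E hC hE, OGWo_eq C D hC hD, OGWo_eq D E hD hE]
        have hrw : ∀ s : ℝ, Real.sqrt ((1 / (n : ℝ) ^ 2) * s)
            = (1 / (n : ℝ)) * Real.sqrt s := by
          intro s
          rw [show (1 / (n : ℝ) ^ 2) = (1 / (n : ℝ))^2 by ring, Real.sqrt_mul (sq_nonneg _),
            Real.sqrt_sq (by positivity)]
        rw [hrw, hrw, hrw, ← mul_add]
        refine mul_le_mul_of_nonneg_left ?_ (by positivity)
        have huv : ∀ i, eigDesc hC i - eigDesc hE i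
            = (eigDesc hC i - eigDesc hD i) + (eigDesc hD i - eigDesc hE i) := fun i => by ring
        calc Real.sqrt (∑ i, (eigDesc hC i - eigDesc hE i) ^ 2)
            = Real.sqrt (∑ i, ((eigDesc hC i - eigDesc hD i) + (eigDesc hD i - eigDesc hE i))^2) := by
              rw [Finset.sum_congr rfl fun i _ => by rw [huv i]]
          _ ≤ _ := ogw_sqrt_sum_triangle n _ _

end
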